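/- Let d be a natural number that is not a perfect square, m a nonzero integer with |m| < √d, T the minimal period of the continued fraction of √d, p_n/q_n the convergents of √d, and (v_n) the associated sequence. Let S be the set of pairs (x, y) of positive coprime natural numbers with x² − d·y² = m, and E_m = { j : 1 ≤ j ≤ T and (−1)^j·v_j = m }. Assume T is even. Then S is nonempty if and only if E_m is nonempty, and in that case S equals the union over N ∈ E_m of the sets { (p_{N+kT−1}, q_{N+kT−1}) : k ∈ ℕ }. -/

import Mathlib

/-- The complete quotients of a real number `x`:
`cq x 0 = x` and `cq x (n+1) = 1 / (cq x n - ⌊cq x n⌋)`. -/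
noncomputable def cq (x : ℝ) : ℕ → ℝ
  | 0 => x
  | n + 1 => (Int.fract (cq x n))⁻¹

/-- The partial quotients of a real number `x`: `pq x n = ⌊cq x n⌋`. -/
noncomputable def pq (x : ℝ) (n : ℕ) : ℤ := ⌊cq x n⌋

namespace Stmt12Aux

lemma cq_zero (x : ℝ) : cq x 0 = x := rfl

lemma cq_succ (x : ℝ) (n : ℕ) : cq x (n + 1) = (Int.fract (cq x n))⁻¹ := rfl

lemma cq_shift (x : ℝ) (s : ℕ) : ∀ k, cq (cq x s) k = cq x (s + k) := by
  intro k
  induction k with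
  | zero => rfl
  | succ k ih =>
    rw [cq_succ, ih, ← cq_succ]
    congr 1

lemma pq_shift (x : ℝ) (s k : ℕ) : pq (cq x s) k = pq x (s + k) := by
  unfold pq; rw [cq_shift]

lemma irrational_cq {x : ℝ} (hx : Irrational x) : ∀ n, Irrational (cq x n) := by
  intro n
  induction n with
  | zero => exact hx
  | succ n ih =>
    rw [cq_succ]
    have : Irrational (Int.fract (cq x n)) := by
      rw [Int.fract]
      exact ih.sub_intCast _
    exact this.inv

lemma fract_pos {x : ℝ} (hx : Irrational x) (n : ℕ) : 0 < Int.fract (cq x n) := by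
  rcases lt_or_eq_of_le (Int.fract_nonneg (cq x n)) with h | h
  · exact h
  · exfalso
    have : Irrational (Int.fract (cq x n)) := by
      rw [Int.fract]; exact (irrational_cq hx n).sub_intCast _
    rw [← h] at this
    exact not_irrational_zero this

lemma one_lt_cq {x : ℝ} (hx : Irrational x) (n : ℕ) : 1 < cq x (n + 1) := by
  rw [cq_succ]
  rw [one_lt_inv_iff₀]
  exact ⟨fract_pos hx n, Int.fract_lt_one _⟩

lemma one_le_pq {x : ℝ} (hx : Irrational x) (n : ℕ) : 1 ≤ pq x (n + 1) := by
  unfold pq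
  exact Int.le_floor.2 (by exact_mod_cast (one_lt_cq hx n).le)

/-- continuant numerators: `contP b (n+2) = p_n` for partial quotients `b`. -/
def contP (b : ℕ → ℤ) : ℕ → ℤ
  | 0 => 0
  | 1 => 1
  | n + 2 => b n * contP b (n + 1) + contP b n

/-- continuant denominators. -/
def contQ (b : ℕ → ℤ) : ℕ → ℤ
  | 0 => 1
  | 1 => 0
  | n + 2 => b n * contQ b (n + 1) + contQ b n

lemma contP_rec (b : ℕ → ℤ) (n : ℕ) :
    contP b (n + 2) = b n * contP b (n + 1) + contP b n := by rw [contP]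

lemma contQ_rec (b : ℕ → ℤ) (n : ℕ) :
    contQ b (n + 2) = b n * contQ b (n + 1) + contQ b n := by rw [contQ]

lemma contP_pos {b : ℕ → ℤ} (hb : ∀ k, 1 ≤ b k) : ∀ n, 1 ≤ contP b (n + 1) := by
  have key : ∀ n, 1 ≤ contP b (n + 1) ∧ 1 ≤ contP b (n + 2) := by
    intro n
    induction n with
    | zero =>
      constructor
      · rw [contP]
      · rw [contP_rec]; have := hb 0; rw [contP, contP]; nlinarith
    | succ k ih =>
      refine ⟨ih.2, ?_⟩
      rw [contP_rec]
      nlinarith [hb (k + 1), ih.1, ih.2]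
  exact fun n => (key n).1

lemma contQ_pos {b : ℕ → ℤ} (hb : ∀ k, 1 ≤ k → 1 ≤ b k) : ∀ n, 1 ≤ contQ b (n + 2) := by
  have key : ∀ n, 1 ≤ contQ b (n + 2) ∧ 1 ≤ contQ b (n + 3) := by
    intro n
    induction n with
    | zero =>
      constructor
      · rw [contQ_rec, contQ, contQ]; ring_nf; norm_num
      · rw [contQ_rec, contQ_rec, contQ, contQ]
        have := hb 1 le_rfl; nlinarith
    | succ k ih =>
      refine ⟨ih.2, ?_⟩
      rw [contQ_rec]
      nlinarith [hb (k + 2) (by omega), ih.1, ih.2]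
  exact fun n => (key n).1

lemma contP_nonneg {b : ℕ → ℤ} (hb : ∀ k, 1 ≤ b k) : ∀ n, 0 ≤ contP b n := by
  intro n
  match n with
  | 0 => rw [contP]
  | n + 1 => linarith [contP_pos hb n]

lemma contQ_nonneg {b : ℕ → ℤ} (hb : ∀ k, 1 ≤ k → 1 ≤ b k) : ∀ n, 0 ≤ contQ b n := by
  intro n
  match n with
  | 0 => rw [contQ]; norm_num
  | 1 => rw [contQ]
  | n + 2 => linarith [contQ_pos hb n]

lemma cont_det (b : ℕ → ℤ) : ∀ n,
    contP b (n + 1) * contQ b n - contP b n * contQ b (n + 1) = (-1) ^ n := by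
  intro n
  induction n with
  | zero => rw [contP, contP, contQ, contQ]; ring
  | succ k ih =>
    rw [contP_rec, contQ_rec, pow_succ]
    nlinarith [ih]

lemma cont_shift (b : ℕ → ℤ) : ∀ n,
    contP b (n + 2) = b 0 * contP (fun k => b (k + 1)) (n + 1) + contQ (fun k => b (k + 1)) (n + 1)
    ∧ contQ b (n + 2) = contP (fun k => b (k + 1)) (n + 1) := by
  have key : ∀ n,
      (contP b (n + 2) = b 0 * contP (fun k => b (k + 1)) (n + 1) + contQ (fun k => b (k + 1)) (n + 1)
        ∧ contQ b (n + 2) = contP (fun k => b (k + 1)) (n + 1)) ∧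
      (contP b (n + 3) = b 0 * contP (fun k => b (k + 1)) (n + 2) + contQ (fun k => b (k + 1)) (n + 2)
        ∧ contQ b (n + 3) = contP (fun k => b (k + 1)) (n + 2)) := by
    intro n
    induction n with
    | zero =>
      refine ⟨⟨?_, ?_⟩, ⟨?_, ?_⟩⟩ <;>
        simp [contP_rec, contQ_rec, contP, contQ] <;> ring
    | succ k ih =>
      refine ⟨ih.2, ?_, ?_⟩
      · rw [contP_rec b (k + 2), ih.2.1, ih.1.1, contP_rec _ (k + 1), contQ_rec _ (k + 1)]
        ring
      · rw [contQ_rec b (k + 2), ih.2.2, ih.1.2, contP_rec _ (k + 1)]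
  exact fun n => (key n).1

lemma cont_cons {b c : ℕ → ℤ} (hc0 : c 0 = 0) (hc : ∀ k, c (k + 1) = b k) : ∀ n,
    contP c (n + 1) = contQ b n ∧ contQ c (n + 1) = contP b n := by
  have key : ∀ n,
      (contP c (n + 1) = contQ b n ∧ contQ c (n + 1) = contP b n) ∧
      (contP c (n + 2) = contQ b (n + 1) ∧ contQ c (n + 2) = contP b (n + 1)) := by
    intro n
    induction n with
    | zero =>
      refine ⟨⟨?_, ?_⟩, ⟨?_, ?_⟩⟩ <;> simp [contP_rec, contQ_rec, contP, contQ, hc0]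
    | succ k ih =>
      refine ⟨ih.2, ?_, ?_⟩
      · rw [contP_rec c (k + 1), ih.2.1, ih.1.1, hc, contQ_rec b k]
      · rw [contQ_rec c (k + 1), ih.2.2, ih.1.2, hc, contP_rec b k]
  exact fun n => (key n).1


lemma pq_zero (x : ℝ) : pq x 0 = ⌊x⌋ := rfl

lemma convergent_eq : ∀ (n : ℕ) (ξ : ℝ), Irrational ξ →
    ξ.convergent n = (contP (pq ξ) (n + 2) : ℚ) / (contQ (pq ξ) (n + 2) : ℚ) := by
  intro n
  induction n with
  | zero =>
    intro ξ hξ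
    rw [Real.convergent_zero, contP_rec, contQ_rec, contP, contP, contQ, contQ, pq_zero]
    push_cast
    ring
  | succ n ih =>
    intro ξ hξ
    have hξ' : Irrational ((Int.fract ξ)⁻¹) := by
      have : Irrational (Int.fract ξ) := by rw [Int.fract]; exact hξ.sub_intCast _
      exact this.inv
    have hcq1 : cq ξ 1 = (Int.fract ξ)⁻¹ := rfl
    have hpq' : pq ((Int.fract ξ)⁻¹) = fun k => pq ξ (k + 1) := by
      funext k
      rw [← hcq1, pq_shift]
      congr 1
      omega
    have hb' : ∀ k, 1 ≤ (fun k => pq ξ (k + 1)) k := fun k => one_le_pq hξ k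
    have hX : (1 : ℤ) ≤ contP (fun k => pq ξ (k + 1)) (n + 2) := contP_pos hb' (n + 1)
    have hX0 : ((contP (fun k => pq ξ (k + 1)) (n + 2) : ℤ) : ℚ) ≠ 0 := by
      exact_mod_cast (by linarith : (contP (fun k => pq ξ (k + 1)) (n + 2) : ℤ) ≠ 0)
    rw [Real.convergent_succ, ih _ hξ', hpq']
    rw [(cont_shift (pq ξ) (n + 1)).1, (cont_shift (pq ξ) (n + 1)).2]
    rw [inv_div, pq_zero]
    push_cast
    field_simp


lemma tendsto_convergent (ξ : ℝ) :
    Filter.Tendsto (fun n => ((ξ.convergent n : ℚ) : ℝ)) Filter.atTop (nhds ξ) := by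
  have h := GenContFract.of_convergence ξ
  have heq : (GenContFract.of ξ).convs = fun n => ((ξ.convergent n : ℚ) : ℝ) := by
    funext n; exact Real.convs_eq_convergent ξ n
  rwa [heq] at h

lemma eq_of_pq_eq {ξ η : ℝ} (hξ : Irrational ξ) (hη : Irrational η)
    (h : ∀ k, pq ξ k = pq η k) : ξ = η := by
  have hpq : pq ξ = pq η := funext h
  have hc : ∀ n, ξ.convergent n = η.convergent n := by
    intro n
    rw [convergent_eq n ξ hξ, convergent_eq n η hη, hpq]
  have h1 := tendsto_convergent ξ
  have h2 := tendsto_convergent η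
  have h1' : Filter.Tendsto (fun n => ((η.convergent n : ℚ) : ℝ)) Filter.atTop (nhds ξ) := by
    have : (fun n => ((ξ.convergent n : ℚ) : ℝ)) = fun n => ((η.convergent n : ℚ) : ℝ) := by
      funext n; rw [hc]
    rwa [this] at h1
  exact tendsto_nhds_unique h1' h2


lemma eq_of_ratio_eq {x y p q : ℤ} (hx : 0 < x) (hy : 0 < y) (hp : 0 ≤ p) (hq : 0 ≤ q)
    (hxy : IsCoprime x y) (hpq : IsCoprime p q) (h : x * q = y * p) : x = p ∧ y = q := by
  have h1 : y ∣ q := by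
    refine (hxy.symm).dvd_of_dvd_mul_left ?_
    exact ⟨p, by linarith⟩
  have h2 : q ∣ y := by
    refine (hpq.symm).dvd_of_dvd_mul_right ?_
    exact ⟨x, by linarith⟩
  have hyq : y = q := Int.dvd_antisymm hy.le hq h1 h2
  refine ⟨?_, hyq⟩
  have hq0 : q ≠ 0 := by rw [← hyq]; exact hy.ne'
  have : x * q = p * q := by rw [h, hyq]; ring
  exact mul_right_cancel₀ hq0 this

end Stmt12Aux


set_option maxHeartbeats 3200000 in
open Stmt12Aux in
/-- Theorem 14, case `T` even: description of the coprime positive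
solutions of `x² - d·y² = m` (`|m| < √d`).  `P (n+2) = p_n`, `Q (n+2) = q_n`, so
`p_{N+kT-1} = P (N+kT+1)`. -/
theorem stmt12 (d : ℕ) (hd : ¬ IsSquare d)
    (m : ℤ) (hm : m ≠ 0) (hmd : |(m : ℝ)| < Real.sqrt d)
    (a a' : ℕ → ℤ) (ha : ∀ n, a n = pq (Real.sqrt d) n)
    (ha'0 : a' 0 = 2 * a 0) (ha' : ∀ n, 1 ≤ n → a' n = a n)
    (u v : ℕ → ℤ) (hu0 : u 0 = a 0) (hv0 : v 0 = 1)
    (hupos : ∀ n, 0 < u n) (hvpos : ∀ n, 0 < v n)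
    (hu : ∀ n, u (n + 1) = a' n * v n - u n)
    (hv : ∀ n, v n * v (n + 1) = (d : ℤ) - (u (n + 1)) ^ 2)
    (P Q : ℕ → ℤ)
    (hP0 : P 0 = 0) (hP1 : P 1 = 1) (hQ0 : Q 0 = 1) (hQ1 : Q 1 = 0)
    (hP : ∀ n, P (n + 2) = a n * P (n + 1) + P n)
    (hQ : ∀ n, Q (n + 2) = a n * Q (n + 1) + Q n)
    (T : ℕ) (hT : 1 ≤ T)
    (hper : ∀ n, 1 ≤ n → pq (Real.sqrt d) (n + T) = pq (Real.sqrt d) n)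
    (hmin : ∀ T', 1 ≤ T' →
      (∀ n, 1 ≤ n → pq (Real.sqrt d) (n + T') = pq (Real.sqrt d) n) → T ≤ T')
    (hTeven : Even T) :
    ((∃ x y : ℕ, 0 < x ∧ 0 < y ∧ Nat.Coprime x y ∧
        (x : ℤ) ^ 2 - (d : ℤ) * (y : ℤ) ^ 2 = m) ↔
      (∃ j, 1 ≤ j ∧ j ≤ T ∧ (-1 : ℤ) ^ j * v j = m)) ∧
    ((∃ j, 1 ≤ j ∧ j ≤ T ∧ (-1 : ℤ) ^ j * v j = m) →
      ∀ x y : ℕ,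
        (0 < x ∧ 0 < y ∧ Nat.Coprime x y ∧
          (x : ℤ) ^ 2 - (d : ℤ) * (y : ℤ) ^ 2 = m) ↔
        (∃ N k : ℕ, 1 ≤ N ∧ N ≤ T ∧ (-1 : ℤ) ^ N * v N = m ∧
          (x : ℤ) = P (N + k * T + 1) ∧ (y : ℤ) = Q (N + k * T + 1))) := by
  set ξ : ℝ := Real.sqrt d with hξdef
  -- basic facts
  have hd2 : 2 ≤ d := by
    by_contra h
    push_neg at h
    interval_cases d
    · exact hd ⟨0, rfl⟩
    · exact hd ⟨1, rfl⟩
  have hirr : Irrational ξ := irrational_sqrt_natCast_iff.mpr hd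
  have hdR : (1 : ℝ) < d := by exact_mod_cast (by omega : 1 < d)
  have hξpos : 0 < ξ := Real.sqrt_pos.mpr (by positivity)
  have hξsq : ξ ^ 2 = d := Real.sq_sqrt (by positivity)
  have hξ1 : 1 < ξ := by nlinarith
  have hξne : ξ ≠ 0 := ne_of_gt hξpos
  have hfl : ∀ n, ⌊cq ξ n⌋ = a n := fun n => (ha n).symm
  have ha0 : 1 ≤ a 0 := by
    rw [ha 0, pq_zero]
    exact Int.le_floor.2 (by exact_mod_cast hξ1.le)
  have hak : ∀ k, 1 ≤ a k := by
    intro k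
    cases k with
    | zero => exact ha0
    | succ k => rw [ha]; exact one_le_pq hirr k
  have haq : a = pq ξ := funext ha
  -- P Q as continuants
  have hPQc : ∀ n, (P n = contP a n ∧ Q n = contQ a n) ∧
      (P (n+1) = contP a (n+1) ∧ Q (n+1) = contQ a (n+1)) := by
    intro n
    induction n with
    | zero =>
      refine ⟨⟨?_, ?_⟩, ?_, ?_⟩ <;> simp [contP, contQ, hP0, hP1, hQ0, hQ1]
    | succ k ih =>
      refine ⟨ih.2, ?_, ?_⟩
      · rw [hP k, ih.1.1, ih.2.1, contP_rec]
      · rw [hQ k, ih.1.2, ih.2.2, contQ_rec]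
  have hPP : ∀ n, P n = contP a n := fun n => (hPQc n).1.1
  have hQQ : ∀ n, Q n = contQ a n := fun n => (hPQc n).1.2
  have hdet : ∀ n, P (n+2) * Q (n+1) - P (n+1) * Q (n+2) = (-1)^(n+1) := by
    intro n
    rw [hPP, hQQ, hPP, hQQ]
    exact cont_det a (n+1)
  have hPpos : ∀ n, 1 ≤ P (n+1) := by intro n; rw [hPP]; exact contP_pos hak n
  have hQpos : ∀ n, 1 ≤ Q (n+2) := by intro n; rw [hQQ]; exact contQ_pos (fun k _ => hak k) n
  have hPnn : ∀ n, 0 ≤ P n := by intro n; rw [hPP]; exact contP_nonneg hak n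
  have hQnn : ∀ n, 0 ≤ Q n := by intro n; rw [hQQ]; exact contQ_nonneg (fun k _ => hak k) n
  have hcopPQ : ∀ n, IsCoprime (P (n+2)) (Q (n+2)) := by
    intro n
    have hd' := hdet n
    have h1 : ((-1:ℤ))^(n+1) * (-1)^(n+1) = 1 := by
      rw [← pow_add]; exact Even.neg_one_pow ⟨n+1, by ring⟩
    exact ⟨(-1)^(n+1) * Q (n+1), (-1)^(n+1) * (-(P (n+1))),
      by linear_combination ((-1:ℤ)^(n+1)) * hd' + h1⟩
  have hcopQP : ∀ n, IsCoprime (Q (n+1)) (P (n+1)) := by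
    intro n
    cases n with
    | zero => rw [hQ1, hP1]; exact isCoprime_zero_left.mpr isUnit_one
    | succ k => exact (hcopPQ k).symm
  -- main identities
  have hu1 : u 1 = a 0 := by rw [hu 0, ha'0, hv0, hu0]; ring
  have hIJ : ∀ n, (P (n+1))^2 - (d:ℤ) * (Q (n+1))^2 = (-1)^n * v n ∧
      P (n+2) * P (n+1) - (d:ℤ) * (Q (n+2) * Q (n+1)) = (-1)^n * u (n+1) := by
    intro n
    induction n with
    | zero =>
      have h2 : P 2 = a 0 := by rw [hP 0, hP1, hP0]; ring
      have h2' : Q 2 = 1 := by rw [hQ 0, hQ1, hQ0]; ring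
      constructor
      · rw [hP1, hQ1, hv0]; ring
      · rw [h2, h2', hP1, hQ1, hu1]; ring
    | succ n ih =>
      have hvn : ((-1:ℤ))^n * v n ≠ 0 :=
        mul_ne_zero (pow_ne_zero _ (by norm_num)) (ne_of_gt (hvpos n))
      have hI : (P (n+2))^2 - (d:ℤ) * (Q (n+2))^2 = (-1)^(n+1) * v (n+1) := by
        apply mul_left_cancel₀ hvn
        have h1 : (((-1:ℤ))^n)^2 = 1 := by
          rw [← pow_mul, mul_comm, pow_mul]; norm_num
        have h2 : (((-1:ℤ))^(n+1))^2 = 1 := by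
          rw [← pow_mul, mul_comm, pow_mul]; norm_num
        calc ((-1:ℤ))^n * v n * ((P (n+2))^2 - (d:ℤ) * (Q (n+2))^2)
            = ((P (n+1))^2 - (d:ℤ) * (Q (n+1))^2) * ((P (n+2))^2 - (d:ℤ) * (Q (n+2))^2) := by
              rw [ih.1]
          _ = (P (n+2) * P (n+1) - (d:ℤ) * (Q (n+2) * Q (n+1)))^2
              - (d:ℤ) * (P (n+2) * Q (n+1) - P (n+1) * Q (n+2))^2 := by ring
          _ = ((-1:ℤ)^n * u (n+1))^2 - (d:ℤ) * ((-1:ℤ)^(n+1))^2 := by rw [ih.2, hdet]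
          _ = (u (n+1))^2 - (d:ℤ) := by rw [mul_pow, h1, h2]; ring
          _ = -(v n * v (n+1)) := by linear_combination hv n
          _ = ((-1:ℤ))^n * v n * ((-1)^(n+1) * v (n+1)) := by
              have h3 : ((-1:ℤ))^n * (-1)^n = 1 := by
                rw [← pow_add]; exact Even.neg_one_pow ⟨n, by ring⟩
              rw [pow_succ]
              linear_combination (v n * v (n+1)) * h3
      refine ⟨hI, ?_⟩
      have hu' := hu (n+1)
      rw [ha' (n+1) (by omega)] at hu'
      have hs : ((-1:ℤ))^(n+1+1) = -((-1:ℤ))^(n+1) := by rw [pow_succ]; ring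
      rw [hP (n+1), hQ (n+1), hu']
      have hs2 : ((-1:ℤ))^(n+1) = -((-1:ℤ))^n := by rw [pow_succ]; ring
      linear_combination (a (n+1)) * hI + ih.2 + (u (n+1)) * hs2
  -- complete quotient formula
  have hcqf : ∀ n, 1 ≤ n → cq ξ n = (((u n : ℤ) : ℝ) + ξ) / ((v n : ℤ) : ℝ) := by
    intro n hn
    induction n with
    | zero => omega
    | succ n ih =>
      rcases Nat.eq_zero_or_pos n with rfl | hn1
      · -- base case n+1 = 1
        have hv1 : v 1 = (d : ℤ) - (a 0)^2 := by
          have := hv 0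
          rw [hv0, hu1] at this
          linarith
        have hne : ξ - ((a 0 : ℤ) : ℝ) ≠ 0 := by
          intro h
          exact hirr.ne_int (a 0) (by linarith)
        have hv1pos : (0:ℝ) < ((v 1 : ℤ) : ℝ) := by exact_mod_cast hvpos 1
        rw [cq_succ, cq_zero]
        rw [Int.fract]
        rw [show ⌊ξ⌋ = a 0 from hfl 0]
        rw [eq_div_iff (ne_of_gt hv1pos), inv_mul_eq_div, div_eq_iff hne]
        rw [hu1, hv1]
        push_cast
        linear_combination -hξsq
      · -- step
        have ihh := ih hn1
        have huu : ((u (n+1) : ℤ) : ℝ) = (a n : ℝ) * (v n : ℤ) - ((u n : ℤ) : ℝ) := by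
          have h := hu n
          rw [ha' n hn1] at h
          exact_mod_cast congrArg (Int.cast : ℤ → ℝ) h
        have hvn : (0:ℝ) < ((v n : ℤ) : ℝ) := by exact_mod_cast hvpos n
        have hvn1 : (0:ℝ) < ((v (n+1) : ℤ) : ℝ) := by exact_mod_cast hvpos (n+1)
        have hne : ξ - ((u (n+1) : ℤ) : ℝ) ≠ 0 := by
          intro h
          exact hirr.ne_int (u (n+1)) (by linarith)
        have hfr : Int.fract (cq ξ n) = (ξ - ((u (n+1) : ℤ) : ℝ)) / ((v n : ℤ) : ℝ) := by
          rw [Int.fract, hfl n, ihh, huu]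
          field_simp
          ring
        rw [cq_succ, hfr, inv_div]
        rw [div_eq_div_iff hne (ne_of_gt hvn1)]
        have hvv : ((v n : ℤ) : ℝ) * ((v (n+1) : ℤ) : ℝ) = (d : ℝ) - ((u (n+1) : ℤ) : ℝ)^2 := by
          exact_mod_cast congrArg (Int.cast : ℤ → ℝ) (hv n)
        linear_combination hvv - hξsq
  -- periodicity of the complete quotients, hence of u and v
  have hcqper : ∀ n, 1 ≤ n → cq ξ (n + T) = cq ξ n := by
    intro n hn
    apply eq_of_pq_eq (irrational_cq hirr _) (irrational_cq hirr _)
    intro k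
    rw [pq_shift, pq_shift]
    have h := hper (n + k) (by omega)
    rw [show n + T + k = n + k + T by omega]
    exact h
  have huvper : ∀ n, 1 ≤ n → u (n + T) = u n ∧ v (n + T) = v n := by
    intro n hn
    have h1 := hcqf n hn
    have h2 := hcqf (n + T) (by omega)
    rw [hcqper n hn, h1] at h2
    have hvn : (0:ℝ) < ((v n : ℤ) : ℝ) := by exact_mod_cast hvpos n
    have hvnT : (0:ℝ) < ((v (n+T) : ℤ) : ℝ) := by exact_mod_cast hvpos (n+T)
    rw [div_eq_div_iff (ne_of_gt hvn) (ne_of_gt hvnT)] at h2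
    have hveq : v (n + T) = v n := by
      by_contra hne
      have hδ : ((v (n+T) : ℤ) : ℝ) - ((v n : ℤ) : ℝ) ≠ 0 := by
        intro h
        apply hne
        exact_mod_cast (by linarith : ((v (n+T) : ℤ) : ℝ) = ((v n : ℤ) : ℝ))
      apply hirr
      refine ⟨((u (n+T) * v n - u n * v (n+T) : ℤ) : ℚ) / ((v (n+T) - v n : ℤ) : ℚ), ?_⟩
      push_cast
      rw [div_eq_iff (by push_cast at hδ ⊢; exact hδ)]
      push_cast
      linear_combination -h2
    refine ⟨?_, hveq⟩
    have hveqR : ((v (n+T) : ℤ) : ℝ) = ((v n : ℤ) : ℝ) := by exact_mod_cast congrArg (Int.cast : ℤ → ℝ) hveq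
    have h3 : (((u n : ℤ) : ℝ) + ξ) * ((v n : ℤ) : ℝ) = (((u (n+T) : ℤ) : ℝ) + ξ) * ((v n : ℤ) : ℝ) := by
      linear_combination h2 - (((u n : ℤ) : ℝ) + ξ) * hveqR
    have h4 := mul_right_cancel₀ (ne_of_gt hvn) h3
    have h5 : ((u n : ℤ) : ℝ) = ((u (n+T) : ℤ) : ℝ) := by linarith
    exact_mod_cast h5.symm
  have hvmul : ∀ (N k : ℕ), 1 ≤ N → v (N + k * T) = v N := by
    intro N k hN
    induction k with
    | zero => simp
    | succ k ih =>
      have h := (huvper (N + k*T) (by omega)).2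
      rw [show N + (k+1) * T = N + k*T + T by ring, h, ih]
  have hsign : ∀ (N k : ℕ), ((-1:ℤ))^(N + k * T) = (-1)^N := by
    intro N k
    rw [pow_add, mul_comm k T, pow_mul, Even.neg_one_pow hTeven, one_pow, mul_one]
  -- every admissible j yields a solution
  have sol : ∀ j, 1 ≤ j → ((-1:ℤ))^j * v j = m →
      0 < P (j+1) ∧ 0 < Q (j+1) ∧ IsCoprime (P (j+1)) (Q (j+1)) ∧
      (P (j+1))^2 - (d:ℤ) * (Q (j+1))^2 = m := by
    intro j hj hjm
    obtain ⟨j', rfl⟩ : ∃ j', j = j' + 1 := ⟨j - 1, by omega⟩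
    refine ⟨by linarith [hPpos (j'+1)], by linarith [hQpos j'], hcopPQ j', ?_⟩
    rw [(hIJ (j'+1)).1]
    exact hjm
  -- Legendre: every solution comes from a convergent
  have conv_sol : ∀ x y : ℕ, 0 < x → 0 < y → Nat.Coprime x y →
      (x:ℤ)^2 - (d:ℤ) * (y:ℤ)^2 = m →
      ∃ j, 1 ≤ j ∧ (-1:ℤ)^j * v j = m ∧ (x:ℤ) = P (j+1) ∧ (y:ℤ) = Q (j+1) := by
    intro x y hx hy hcop heq
    have hX1 : (1:ℝ) ≤ (x:ℝ) := by exact_mod_cast hx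
    have hY1 : (1:ℝ) ≤ (y:ℝ) := by exact_mod_cast hy
    have hx0 : (x:ℝ) ≠ 0 := by positivity
    have hy0 : (y:ℝ) ≠ 0 := by positivity
    have hE : (x:ℝ)^2 - (d:ℝ) * (y:ℝ)^2 = (m:ℝ) := by exact_mod_cast heq
    have hcopZ : IsCoprime (x:ℤ) (y:ℤ) := Nat.isCoprime_iff_coprime.mpr hcop
    rcases lt_or_gt_of_ne hm with hm0 | hm0
    · -- m < 0 : y/x is a convergent of ξ⁻¹
      have hm0R : (m:ℝ) < 0 := by exact_mod_cast hm0
      have hmlt : -(m:ℝ) < ξ := by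
        have := (abs_lt.mp hmd).1
        linarith
      have hXY : (x:ℝ) < (y:ℝ) * ξ := by
        have h1 : (x:ℝ)^2 < ((y:ℝ)*ξ)^2 := by
          rw [mul_pow, hξsq]; nlinarith
        exact lt_of_pow_lt_pow_left₀ 2 (by positivity) h1
      have hkey : ((y:ℝ)*ξ - x) * ((y:ℝ)*ξ + x) = -(m:ℝ) := by
        linear_combination -hE + (y:ℝ)^2 * hξsq
      have hpos : (0:ℝ) < (y:ℝ)*ξ - x := by linarith
      have h2 : ((y:ℝ)*ξ - x) * (2*(x:ℝ)) < ξ := by nlinarith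
      have hxne : (x:ℕ) ≠ 0 := by omega
      set q : ℚ := Rat.mk' (y:ℤ) x hxne (by rw [Int.natAbs_natCast]; exact hcop.symm)
        with hqdef
      have hqnum : q.num = (y:ℤ) := rfl
      have hqden : q.den = x := rfl
      have hqR : (q:ℝ) = (y:ℝ)/(x:ℝ) := by
        rw [Rat.cast_def, hqnum, hqden]; push_cast; ring
      have hξ'irr : Irrational ξ⁻¹ := hirr.inv
      have hlt1 : ξ⁻¹ < 1 := by
        rw [inv_lt_one_iff₀]; right; exact hξ1
      have hleg : |ξ⁻¹ - (q:ℝ)| < 1 / (2 * (q.den:ℝ)^2) := by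
        rw [hqR, hqden]
        have heqv : (y:ℝ)/(x:ℝ) - ξ⁻¹ = ((y:ℝ)*ξ - x)/((x:ℝ)*ξ) := by
          field_simp
          try ring
        have hgt : (0:ℝ) < (y:ℝ)/(x:ℝ) - ξ⁻¹ := by
          rw [heqv]
          exact div_pos hpos (by positivity)
        rw [abs_sub_comm, abs_of_pos hgt, heqv]
        rw [div_lt_div_iff₀ (by positivity) (by positivity)]
        nlinarith [h2, hX1, hξpos]
      obtain ⟨n, hn⟩ := Real.exists_rat_eq_convergent hleg
      have hc0 : pq ξ⁻¹ 0 = 0 := by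
        rw [pq_zero, Int.floor_eq_zero_iff]
        exact ⟨by positivity, hlt1⟩
      have hfr' : Int.fract ξ⁻¹ = ξ⁻¹ :=
        Int.fract_eq_self.mpr ⟨by positivity, hlt1⟩
      have hcq1 : cq ξ⁻¹ 1 = ξ := by rw [cq_succ, cq_zero, hfr', inv_inv]
      have hcons : ∀ k, pq ξ⁻¹ (k+1) = a k := by
        intro k
        have h := pq_shift ξ⁻¹ 1 k
        rw [hcq1] at h
        rw [show k+1 = 1+k by omega, ← h, ha]
      have hconv : ξ⁻¹.convergent n = ((contQ a (n+1) : ℤ) : ℚ) / ((contP a (n+1) : ℤ) : ℚ) := by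
        rw [convergent_eq n _ hξ'irr, (cont_cons hc0 hcons (n+1)).1,
          (cont_cons hc0 hcons (n+1)).2]
      have hP1' : (1:ℤ) ≤ contP a (n+1) := contP_pos hak n
      have hPne : ((contP a (n+1) : ℤ) : ℚ) ≠ 0 := by
        exact_mod_cast (by linarith : contP a (n+1) ≠ 0)
      have hqQ : (q : ℚ) = ((y:ℤ):ℚ)/((x:ℤ):ℚ) := by
        rw [hqdef, Rat.mk_eq_divInt, Rat.divInt_eq_div]
        try push_cast
        try ring
      have hcross : (y:ℤ) * contP a (n+1) = (x:ℤ) * contQ a (n+1) := by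
        have h := hn
        rw [hconv, hqQ] at h
        rw [div_eq_div_iff (by exact_mod_cast hx0) hPne] at h
        have h2 : ((y:ℤ):ℚ) * contP a (n+1) = ((x:ℤ):ℚ) * contQ a (n+1) := by
          linear_combination h
        exact_mod_cast h2
      have hcopQP' : IsCoprime (contQ a (n+1)) (contP a (n+1)) := by
        have h := hcopQP n
        rwa [hPP, hQQ] at h
      obtain ⟨hyQ, hxP⟩ := eq_of_ratio_eq (by exact_mod_cast hy) (by exact_mod_cast hx)
        (contQ_nonneg (fun k _ => hak k) (n+1)) (contP_nonneg hak (n+1))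
        hcopZ.symm hcopQP' hcross
      have hn1 : 1 ≤ n := by
        by_contra hn0
        have : n = 0 := by omega
        subst this
        rw [show contQ a 1 = 0 from rfl] at hyQ
        omega
      refine ⟨n, hn1, ?_, by rw [hPP]; exact hxP, by rw [hQQ]; exact hyQ⟩
      rw [← (hIJ n).1, hPP (n+1), hQQ (n+1), ← hxP, ← hyQ]
      exact heq
    · -- m > 0 : x/y is a convergent of ξ
      have hm0R : (0:ℝ) < (m:ℝ) := by exact_mod_cast hm0
      have hmlt : (m:ℝ) < ξ := lt_of_abs_lt hmd
      have hYX : (y:ℝ) * ξ < (x:ℝ) := by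
        have h1 : ((y:ℝ)*ξ)^2 < (x:ℝ)^2 := by
          rw [mul_pow, hξsq]; nlinarith
        exact lt_of_pow_lt_pow_left₀ 2 (by positivity) h1
      have hkey : ((x:ℝ) - (y:ℝ)*ξ) * ((x:ℝ) + (y:ℝ)*ξ) = (m:ℝ) := by
        linear_combination hE - (y:ℝ)^2 * hξsq
      have hpos : (0:ℝ) < (x:ℝ) - (y:ℝ)*ξ := by linarith
      have h3 : ((x:ℝ) - (y:ℝ)*ξ) * (2*(y:ℝ)) * ξ < (m:ℝ) := by nlinarith
      have h2 : ((x:ℝ) - (y:ℝ)*ξ) * (2*(y:ℝ)) < 1 := by nlinarith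
      have hyne : (y:ℕ) ≠ 0 := by omega
      set q : ℚ := Rat.mk' (x:ℤ) y hyne (by rw [Int.natAbs_natCast]; exact hcop)
        with hqdef
      have hqnum : q.num = (x:ℤ) := rfl
      have hqden : q.den = y := rfl
      have hqR : (q:ℝ) = (x:ℝ)/(y:ℝ) := by
        rw [Rat.cast_def, hqnum, hqden]; push_cast; ring
      have hleg : |ξ - (q:ℝ)| < 1 / (2 * (q.den:ℝ)^2) := by
        rw [hqR, hqden]
        have heqv : (x:ℝ)/(y:ℝ) - ξ = ((x:ℝ) - (y:ℝ)*ξ)/(y:ℝ) := by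
          field_simp
        have hgt : (0:ℝ) < (x:ℝ)/(y:ℝ) - ξ := by
          rw [heqv]
          exact div_pos hpos (by positivity)
        rw [abs_sub_comm, abs_of_pos hgt, heqv]
        rw [div_lt_div_iff₀ (by positivity) (by positivity)]
        nlinarith [h2, hY1]
      obtain ⟨n, hn⟩ := Real.exists_rat_eq_convergent hleg
      have hconv : ξ.convergent n = ((contP a (n+2) : ℤ) : ℚ) / ((contQ a (n+2) : ℤ) : ℚ) := by
        rw [convergent_eq n ξ hirr, ← haq]
      have hQ1' : (1:ℤ) ≤ contQ a (n+2) := contQ_pos (fun k _ => hak k) n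
      have hQne : ((contQ a (n+2) : ℤ) : ℚ) ≠ 0 := by
        exact_mod_cast (by linarith : contQ a (n+2) ≠ 0)
      have hqQ : (q : ℚ) = ((x:ℤ):ℚ)/((y:ℤ):ℚ) := by
        rw [hqdef, Rat.mk_eq_divInt, Rat.divInt_eq_div]
        try push_cast
        try ring
      have hcross : (x:ℤ) * contQ a (n+2) = (y:ℤ) * contP a (n+2) := by
        have h := hn
        rw [hconv, hqQ] at h
        rw [div_eq_div_iff (by exact_mod_cast hy0) hQne] at h
        have h2 : ((x:ℤ):ℚ) * contQ a (n+2) = ((y:ℤ):ℚ) * contP a (n+2) := by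
          linear_combination h
        exact_mod_cast h2
      have hcopPQ' : IsCoprime (contP a (n+2)) (contQ a (n+2)) := by
        have h := hcopPQ n
        rwa [hPP, hQQ] at h
      obtain ⟨hxP, hyQ⟩ := eq_of_ratio_eq (by exact_mod_cast hx) (by exact_mod_cast hy)
        (contP_nonneg hak (n+2)) (contQ_nonneg (fun k _ => hak k) (n+2))
        hcopZ hcopPQ' hcross
      refine ⟨n+1, by omega, ?_, by rw [hPP]; exact hxP, by rw [hQQ]; exact hyQ⟩
      rw [← (hIJ (n+1)).1, hPP (n+2), hQQ (n+2), ← hxP, ← hyQ]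
      exact heq
  -- reduction modulo the period
  have reduce : ∀ j, 1 ≤ j → ((-1:ℤ))^j * v j = m →
      ∃ N k, 1 ≤ N ∧ N ≤ T ∧ j = N + k * T ∧ ((-1:ℤ))^N * v N = m := by
    intro j hj hjm
    have hje : j = ((j-1) % T + 1) + ((j-1)/T) * T := by
      have := Nat.mod_add_div' (j-1) T
      omega
    refine ⟨(j-1) % T + 1, (j-1)/T, by omega, ?_, hje, ?_⟩
    · have := Nat.mod_lt (j-1) (show 0 < T by omega)
      omega
    · rw [← hvmul ((j-1)%T+1) ((j-1)/T) (by omega), ← hsign ((j-1)%T+1) ((j-1)/T), ← hje]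
      exact hjm
  -- assembling the statement
  constructor
  · constructor
    · rintro ⟨x, y, hx, hy, hcop, heq⟩
      obtain ⟨j, hj1, hjm, _, _⟩ := conv_sol x y hx hy hcop heq
      obtain ⟨N, k, hN1, hNT, _, hNm⟩ := reduce j hj1 hjm
      exact ⟨N, hN1, hNT, hNm⟩
    · rintro ⟨j, hj1, hjT, hjm⟩
      obtain ⟨hp, hq, hcopZ, heq⟩ := sol j hj1 hjm
      have hx' : ((P (j+1)).toNat : ℤ) = P (j+1) := Int.toNat_of_nonneg hp.le
      have hy' : ((Q (j+1)).toNat : ℤ) = Q (j+1) := Int.toNat_of_nonneg hq.le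
      refine ⟨(P (j+1)).toNat, (Q (j+1)).toNat, by omega, by omega, ?_, ?_⟩
      · rw [← Nat.isCoprime_iff_coprime, hx', hy']
        exact hcopZ
      · rw [hx', hy']
        exact heq
  · intro _ x y
    constructor
    · rintro ⟨hx, hy, hcop, heq⟩
      obtain ⟨j, hj1, hjm, hxP, hyQ⟩ := conv_sol x y hx hy hcop heq
      obtain ⟨N, k, hN1, hNT, hje, hNm⟩ := reduce j hj1 hjm
      refine ⟨N, k, hN1, hNT, hNm, ?_, ?_⟩
      · rw [hxP, hje]
      · rw [hyQ, hje]
    · rintro ⟨N, k, hN1, hNT, hNm, hxP, hyQ⟩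
      have hjm : ((-1:ℤ))^(N + k*T) * v (N + k*T) = m := by
        rw [hsign N k, hvmul N k hN1]
        exact hNm
      obtain ⟨hp, hq, hcopZ, heq⟩ := sol (N + k*T) (by omega) hjm
      have hxpos : (0:ℤ) < (x:ℤ) := hxP ▸ hp
      have hypos : (0:ℤ) < (y:ℤ) := hyQ ▸ hq
      refine ⟨by exact_mod_cast hxpos, by exact_mod_cast hypos, ?_, ?_⟩
      · rw [← Nat.isCoprime_iff_coprime, hxP, hyQ]
        exact hcopZ
      · rw [hxP, hyQ]
        exact heq
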